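/- For every integer q ≥ 2, the product of sin(πj/q) over all integers j with 1 ≤ j ≤ ⌊(q−1)/2⌋ and gcd(j,q) = 1 equals ε(q) / 2^{φ(q)/2}. -/

import Mathlib

open Finset

/-- `ε(q) = √p` if `q` is a power of a prime `p`, and `ε(q) = 1` otherwise. -/
noncomputable def eps (q : ℕ) : ℝ :=
  if IsPrimePow q then Real.sqrt q.minFac else 1

open Real Complex Polynomial

lemma abs_one_sub_exp (a : ℝ) :
    ‖1 - Complex.exp ((2*a : ℝ) * Complex.I)‖ = 2 * |Real.sin a| := by
  have h2 : Complex.exp ((2*a:ℝ) * Complex.I)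
      = Complex.exp ((a:ℝ)*Complex.I) * Complex.exp ((a:ℝ)*Complex.I) := by
    rw [← Complex.exp_add]; push_cast; ring_nf
  have h3 : Complex.exp ((a:ℝ)*Complex.I) * Complex.exp (-(a:ℝ)*Complex.I) = 1 := by
    rw [← Complex.exp_add]; ring_nf; exact Complex.exp_zero
  have hI : Complex.I ^ 2 = -1 := Complex.I_sq
  have h4 : 2 * Complex.I * Complex.sin (a:ℝ)
      = Complex.exp ((a:ℝ)*Complex.I) - Complex.exp (-(a:ℝ)*Complex.I) := by
    rw [Complex.sin]
    push_cast
    linear_combination (Complex.exp (-(a:ℝ)*Complex.I) - Complex.exp ((a:ℝ)*Complex.I)) * hI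
  have h : (1 : ℂ) - Complex.exp ((2*a : ℝ) * Complex.I)
      = -Complex.exp ((a:ℝ) * Complex.I) * (2 * Complex.I * Complex.sin (a:ℝ)) := by
    rw [h4]
    linear_combination -h2 - h3
  rw [h]
  simp only [norm_mul, norm_neg, Complex.norm_exp, Complex.norm_two, Complex.norm_I,
    ← Complex.ofReal_sin, Complex.norm_real]
  simp

lemma cyc_prod (q : ℕ) (hq : 2 ≤ q) :
    ∏ j ∈ (range q).filter (fun j => Nat.gcd j q = 1),
      (1 - Complex.exp (2 * Real.pi * Complex.I / q) ^ j)
    = ((Polynomial.cyclotomic q ℂ).eval 1) := by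
  have hq0 : q ≠ 0 := by omega
  have hζ : IsPrimitiveRoot (Complex.exp (2 * Real.pi * Complex.I / q)) q :=
    Complex.isPrimitiveRoot_exp q hq0
  haveI : NeZero q := ⟨hq0⟩
  rw [Polynomial.cyclotomic_eq_prod_X_sub_primitiveRoots hζ, Polynomial.eval_prod]
  simp only [Polynomial.eval_sub, Polynomial.eval_X, Polynomial.eval_C]
  refine Finset.prod_bij (fun j _ => Complex.exp (2 * Real.pi * Complex.I / q) ^ j) ?_ ?_ ?_ ?_
  · intro a ha
    simp only [mem_filter, mem_range] at ha
    exact (mem_primitiveRoots (by omega)).2 (hζ.pow_of_coprime a ha.2)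
  · intro a ha b hb hab
    simp only [mem_filter, mem_range] at ha hb
    exact hζ.pow_inj ha.1 hb.1 hab
  · intro μ hμ
    rw [mem_primitiveRoots (by omega : 0 < q)] at hμ
    obtain ⟨i, hik, hic, hie⟩ := (hζ.isPrimitiveRoot_iff).1 hμ
    exact ⟨i, by simp [mem_filter, mem_range, hik, hic], hie⟩
  · intro a _; rfl

lemma cyc_eval (q : ℕ) (hq : 2 ≤ q) :
    ((Polynomial.cyclotomic q ℂ).eval 1) = ((eps q ^ 2 : ℝ) : ℂ) := by
  by_cases h : IsPrimePow q
  · obtain ⟨p, k, hp, hk, rfl⟩ := h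
    haveI : Fact p.Prime := ⟨hp.nat_prime⟩
    obtain ⟨k, rfl⟩ : ∃ m, k = m + 1 := ⟨k - 1, by omega⟩
    rw [Polynomial.eval_one_cyclotomic_prime_pow]
    have heps : eps (p ^ (k+1)) = Real.sqrt p := by
      rw [eps, if_pos ⟨p, k+1, hp, by omega, rfl⟩, hp.nat_prime.pow_minFac (by omega)]
    rw [heps, Real.sq_sqrt (by positivity)]
    norm_num
  · rw [Polynomial.eval_one_cyclotomic_not_prime_pow, eps, if_neg h]
    · norm_num
    · intro p hp k hpk
      have hk0 : k ≠ 0 := by rintro rfl; simp at hpk; omega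
      exact h ⟨p, k, hp.prime, Nat.pos_of_ne_zero hk0, hpk⟩

lemma eps_nonneg (q : ℕ) : 0 ≤ eps q := by
  rw [eps]; split <;> positivity

lemma full_sin_prod (q : ℕ) (hq : 2 ≤ q) :
    ∏ j ∈ (range q).filter (fun j => Nat.gcd j q = 1),
      Real.sin (Real.pi * j / q) = eps q ^ 2 / 2 ^ q.totient := by
  have hq0 : (q : ℝ) ≠ 0 := by positivity
  have hmem : ∀ j ∈ (range q).filter (fun j => Nat.gcd j q = 1), 1 ≤ j ∧ j < q := by
    intro j hj
    simp only [mem_filter, mem_range] at hj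
    refine ⟨?_, hj.1⟩
    rcases Nat.eq_zero_or_pos j with rfl | h; · simp [Nat.gcd] at hj; omega
    · exact h
  have key : ∏ j ∈ (range q).filter (fun j => Nat.gcd j q = 1),
      (2 * Real.sin (Real.pi * j / q)) = eps q ^ 2 := by
    have h1 : ∀ j ∈ (range q).filter (fun j => Nat.gcd j q = 1),
        2 * Real.sin (Real.pi * j / q)
        = ‖1 - Complex.exp (2 * Real.pi * Complex.I / q) ^ j‖ := by
      intro j hj
      obtain ⟨hj1, hj2⟩ := hmem j hj
      have he : Complex.exp (2 * Real.pi * Complex.I / q) ^ j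
          = Complex.exp ((2 * (Real.pi * j / q) : ℝ) * Complex.I) := by
        rw [← Complex.exp_nat_mul]
        congr 1
        push_cast
        field_simp
      rw [he, abs_one_sub_exp]
      have hs : 0 < Real.sin (Real.pi * j / q) := by
        apply Real.sin_pos_of_pos_of_lt_pi
        · positivity
        · rw [div_lt_iff₀ (by positivity)]
          have : (j : ℝ) < q := by exact_mod_cast hj2
          nlinarith [Real.pi_pos]
      rw [abs_of_pos hs]
    rw [Finset.prod_congr rfl h1, ← Complex.norm_prod, cyc_prod q hq, cyc_eval q hq,
      Complex.norm_real, Real.norm_eq_abs, _root_.abs_of_nonneg (by positivity)]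
  have hcard : ((range q).filter (fun j => Nat.gcd j q = 1)).card = q.totient := by
    rw [Nat.totient]
    congr 1
    ext j
    simp [Nat.coprime_comm, Nat.Coprime]
  rw [Finset.prod_mul_distrib, Finset.prod_const, hcard] at key
  rw [eq_div_iff (by positivity)]
  linarith [key]

/-- For `q ≥ 2`, `∏_{1 ≤ j ≤ ⌊(q-1)/2⌋, (j,q)=1} sin(πj/q) = ε(q)/2^{φ(q)/2}`. -/
theorem sin_product_coprime (q : ℕ) (hq : 2 ≤ q) :
    ∏ j ∈ (Icc 1 ((q - 1) / 2)).filter (fun j => Nat.gcd j q = 1),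
        Real.sin (Real.pi * (j : ℝ) / (q : ℝ))
      = eps q / 2 ^ ((q.totient : ℝ) / 2) := by
  rcases eq_or_lt_of_le hq with rfl | hq3
  · -- q = 2
    have h1 : (Icc 1 ((2 - 1) / 2)).filter (fun j => Nat.gcd j 2 = 1) = (∅ : Finset ℕ) := by
      decide
    rw [h1, Finset.prod_empty]
    have heps : eps 2 = Real.sqrt 2 := by
      rw [eps, if_pos Nat.prime_two.prime.isPrimePow]
      norm_num
    rw [heps, Nat.totient_two]
    push_cast
    rw [← Real.sqrt_eq_rpow, div_self (by positivity)]
  · -- q ≥ 3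
    have hq0 : (q:ℝ) ≠ 0 := by positivity
    set m := (q - 1) / 2 with hm
    have hnothalf : ∀ j : ℕ, Nat.gcd j q = 1 → 2 * j ≠ q := by
      intro j hj hcon
      have hdvd : j ∣ q := ⟨2, by omega⟩
      have h1 : j ∣ 1 := hj ▸ Nat.dvd_gcd dvd_rfl hdvd
      have := Nat.le_of_dvd one_pos h1
      omega
    have hsplit : (range q).filter (fun j => Nat.gcd j q = 1)
        = (Icc 1 m).filter (fun j => Nat.gcd j q = 1)
          ∪ (Icc (m+1) (q-1)).filter (fun j => Nat.gcd j q = 1) := by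
      rw [← Finset.filter_union]
      ext j
      simp only [mem_filter, mem_union, mem_range, mem_Icc]
      constructor
      · rintro ⟨hjq, hg⟩
        have hj0 : j ≠ 0 := by
          rintro rfl
          rw [Nat.gcd_zero_left] at hg
          omega
        exact ⟨by omega, hg⟩
      · rintro ⟨hjr, hg⟩
        exact ⟨by omega, hg⟩
    have hdisj : Disjoint ((Icc 1 m).filter (fun j => Nat.gcd j q = 1))
        ((Icc (m+1) (q-1)).filter (fun j => Nat.gcd j q = 1)) := by
      apply Finset.disjoint_filter_filter
      simp only [Finset.disjoint_left, mem_Icc]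
      intro a ha hb
      omega
    set f : ℕ → ℝ := fun j => Real.sin (Real.pi * j / q) with hf
    have hpair : ∏ j ∈ (Icc (m+1) (q-1)).filter (fun j => Nat.gcd j q = 1), f j
        = ∏ j ∈ (Icc 1 m).filter (fun j => Nat.gcd j q = 1), f j := by
      apply Finset.prod_nbij' (fun j => q - j) (fun j => q - j)
      · intro a ha
        simp only [mem_filter, mem_Icc] at ha ⊢
        obtain ⟨⟨h1, h2⟩, h3⟩ := ha
        have hnh := hnothalf a h3
        refine ⟨⟨by omega, by omega⟩, ?_⟩
        exact (Nat.coprime_self_sub_left (m := a) (n := q) (by omega)).2 h3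
      · intro a ha
        simp only [mem_filter, mem_Icc] at ha ⊢
        obtain ⟨⟨h1, h2⟩, h3⟩ := ha
        have hnh := hnothalf a h3
        refine ⟨⟨by omega, by omega⟩, ?_⟩
        exact (Nat.coprime_self_sub_left (m := a) (n := q) (by omega)).2 h3
      · intro a ha
        simp only [mem_filter, mem_Icc] at ha
        omega
      · intro a ha
        simp only [mem_filter, mem_Icc] at ha
        omega
      · intro a ha
        simp only [mem_filter, mem_Icc] at ha
        obtain ⟨⟨h1, h2⟩, h3⟩ := ha
        have hc : ((q - a : ℕ) : ℝ) = (q : ℝ) - a := by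
          push_cast [Nat.cast_sub (by omega : a ≤ q)]
          ring
        rw [hf]
        simp only
        rw [hc]
        have : Real.pi * ((q:ℝ) - a) / q = Real.pi - Real.pi * a / q := by
          field_simp
        rw [this, Real.sin_pi_sub]
    -- combine
    have hfull := full_sin_prod q hq
    rw [hsplit, Finset.prod_union hdisj, hpair, ← sq] at hfull
    -- now hfull : (∏ half) ^ 2 = eps q ^ 2 / 2 ^ totient
    set P := ∏ j ∈ (Icc 1 m).filter (fun j => Nat.gcd j q = 1), f j with hP
    have hPpos : 0 ≤ P := by
      apply Finset.prod_nonneg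
      intro j hj
      simp only [mem_filter, mem_Icc] at hj
      apply Real.sin_nonneg_of_nonneg_of_le_pi
      · positivity
      · rw [div_le_iff₀ (by positivity)]
        have h1 : (j:ℝ) ≤ q := by
          have : j ≤ q := by omega
          exact_mod_cast this
        nlinarith [Real.pi_pos]
    have hR : (0:ℝ) ≤ eps q / 2 ^ ((q.totient : ℝ) / 2) := by
      apply div_nonneg (eps_nonneg q)
      positivity
    have hsq : (eps q / 2 ^ ((q.totient : ℝ) / 2)) ^ 2 = eps q ^ 2 / 2 ^ q.totient := by
      rw [div_pow, ← Real.rpow_natCast ((2:ℝ) ^ ((q.totient : ℝ) / 2)) 2,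
        ← Real.rpow_mul (by norm_num)]
      norm_num
    have habs : |P| = |eps q / 2 ^ ((q.totient : ℝ) / 2)| := by
      have h2 : |P|^2 = |eps q / 2 ^ ((q.totient : ℝ) / 2)|^2 := by
        rw [_root_.sq_abs, _root_.sq_abs, hfull, hsq]
      nlinarith [abs_nonneg P, abs_nonneg (eps q / 2 ^ ((q.totient : ℝ) / 2))]
    rw [_root_.abs_of_nonneg hPpos, _root_.abs_of_nonneg hR] at habs
    exact habs
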